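/- Consider the pentagonal star spin system of N = 6 spins with coupling constant J > 0: spins 0,…,4 occupy the vertices of a pentagon with edges {μ, μ+1 mod 5}, and spin 5 (the center) is joined to each of the five pentagon vertices; the energy is H₀(s) = 2J (∑_{μ=0}^{4} ⟨s_μ, s_{μ+1 mod 5}⟩ + ∑_{μ=0}^{4} ⟨s_μ, s_5⟩). Then the minimal energy over all states equals −(5 + 2√5)·J: every state s satisfies H₀(s) ≥ −(5 + 2√5)·J, and there is a (non-coplanar) state attaining this value. -/

import Mathlib

open scoped RealInnerProductSpace

/-- The energy of the pentagonal star spin system with coupling `J`: spins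
`0,…,4` form a pentagon (edges `{μ, μ+1 mod 5}`) and spin `5` is the center,
joined to all five pentagon vertices. -/
noncomputable def pentStarEnergy (J : ℝ) (s : Fin 6 → EuclideanSpace ℝ (Fin 3)) : ℝ :=
  2 * J * ((∑ μ : Fin 5, ⟪s μ.castSucc, s (μ + 1).castSucc⟫) +
    ∑ μ : Fin 5, ⟪s μ.castSucc, s 5⟫)

lemma pentStarEnergy_eq (J : ℝ) (s : Fin 6 → EuclideanSpace ℝ (Fin 3)) :
    pentStarEnergy J s = 2 * J * ((⟪s 0, s 1⟫ + ⟪s 1, s 2⟫ + ⟪s 2, s 3⟫ + ⟪s 3, s 4⟫ + ⟪s 4, s 0⟫) +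
      (⟪s 0, s 5⟫ + ⟪s 1, s 5⟫ + ⟪s 2, s 5⟫ + ⟪s 3, s 5⟫ + ⟪s 4, s 5⟫)) := by
  have c0 : Fin.castSucc (0:Fin 5) = (0:Fin 6) := rfl
  have c1 : Fin.castSucc (1:Fin 5) = (1:Fin 6) := rfl
  have c2 : Fin.castSucc (2:Fin 5) = (2:Fin 6) := rfl
  have c3 : Fin.castSucc (3:Fin 5) = (3:Fin 6) := rfl
  have c4 : Fin.castSucc (4:Fin 5) = (4:Fin 6) := rfl
  have a0 : ((0:Fin 5) + 1) = (1:Fin 5) := rfl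
  have a1 : ((1:Fin 5) + 1) = (2:Fin 5) := rfl
  have a2 : ((2:Fin 5) + 1) = (3:Fin 5) := rfl
  have a3 : ((3:Fin 5) + 1) = (4:Fin 5) := rfl
  have a4 : ((4:Fin 5) + 1) = (0:Fin 5) := rfl
  simp only [pentStarEnergy, Fin.sum_univ_five, a0, a1, a2, a3, a4, c0, c1, c2, c3, c4]

/-- Sum-of-squares inequality for five unit vectors on a pentagon:
`0 ≤ 5 + 2cos(72°)·(edge sum) + 2cos(144°)·(diagonal sum)`. -/
lemma pent_sos {F : Type*} [NormedAddCommGroup F] [InnerProductSpace ℝ F]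
    (v0 v1 v2 v3 v4 : F) (h0 : ‖v0‖ = 1) (h1 : ‖v1‖ = 1) (h2 : ‖v2‖ = 1)
    (h3 : ‖v3‖ = 1) (h4 : ‖v4‖ = 1) :
    0 ≤ 5 + ((Real.sqrt 5 - 1)/2) * (⟪v0,v1⟫ + ⟪v1,v2⟫ + ⟪v2,v3⟫ + ⟪v3,v4⟫ + ⟪v4,v0⟫)
      - ((Real.sqrt 5 + 1)/2) * (⟪v0,v2⟫ + ⟪v1,v3⟫ + ⟪v2,v4⟫ + ⟪v0,v3⟫ + ⟪v1,v4⟫) := by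
  have hr : Real.sqrt 5 ^ 2 = 5 := Real.sq_sqrt (by norm_num)
  have hr0 : (0:ℝ) ≤ Real.sqrt 5 := Real.sqrt_nonneg 5
  set r := Real.sqrt 5 with hrdef
  have hd0 : ⟪v0,v0⟫ = (1:ℝ) := by rw [real_inner_self_eq_norm_sq, h0]; norm_num
  have hd1 : ⟪v1,v1⟫ = (1:ℝ) := by rw [real_inner_self_eq_norm_sq, h1]; norm_num
  have hd2 : ⟪v2,v2⟫ = (1:ℝ) := by rw [real_inner_self_eq_norm_sq, h2]; norm_num
  have hd3 : ⟪v3,v3⟫ = (1:ℝ) := by rw [real_inner_self_eq_norm_sq, h3]; norm_num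
  have hd4 : ⟪v4,v4⟫ = (1:ℝ) := by rw [real_inner_self_eq_norm_sq, h4]; norm_num
  set A : F := v0 + ((r-1)/4) • v1 + (-(r+1)/4) • v2 + (-(r+1)/4) • v3 + ((r-1)/4) • v4 with hA
  set C : F := (((r-1)/4) • v0 + (-(r+1)/4) • v1 + (-(r+1)/4) • v2 + ((r-1)/4) • v3 + v4)
      - ((r-1)/4) • A with hC
  have hAnn : (0:ℝ) ≤ ⟪A,A⟫ := real_inner_self_nonneg
  have hCnn : (0:ℝ) ≤ ⟪C,C⟫ := real_inner_self_nonneg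
  have key : (10+2*r)/16 * ⟪A,A⟫ + ⟪C,C⟫
      = (10+2*r)/16 * (5 + ((r - 1)/2) * (⟪v0,v1⟫ + ⟪v1,v2⟫ + ⟪v2,v3⟫ + ⟪v3,v4⟫ + ⟪v4,v0⟫)
        - ((r + 1)/2) * (⟪v0,v2⟫ + ⟪v1,v3⟫ + ⟪v2,v4⟫ + ⟪v0,v3⟫ + ⟪v1,v4⟫)) := by
    simp only [hA, hC, inner_sub_left, inner_sub_right, inner_add_left, inner_add_right,
      real_inner_smul_left, real_inner_smul_right,
      real_inner_comm v0 v1, real_inner_comm v0 v2, real_inner_comm v0 v3, real_inner_comm v0 v4,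
      real_inner_comm v1 v2, real_inner_comm v1 v3, real_inner_comm v1 v4,
      real_inner_comm v2 v3, real_inner_comm v2 v4, real_inner_comm v3 v4,
      hd0, hd1, hd2, hd3, hd4]
    linear_combination (r^2/64 + r/32 + 15/64
      + (-r^2/128 - 15/128) * ⟪v1,v2⟫
      + (-r^2/128 - r/16 - 15/128) * ⟪v1,v3⟫
      + (r^2/128 + r/64 + 5/128) * ⟪v1,v4⟫
      + (r^2/128 + r/64 - 15/128) * ⟪v2,v3⟫
      + (-r^2/128 + r/32 + 5/128) * ⟪v2,v4⟫
      + (-r^2/128 - r/32 + 5/128) * ⟪v3,v4⟫) * hr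
  have hpos : (0:ℝ) < (10+2*r)/16 := by linarith
  nlinarith [hAnn, hCnn, key, hpos]

noncomputable def pentVec (x y z : ℝ) : EuclideanSpace ℝ (Fin 3) :=
  (WithLp.equiv 2 (Fin 3 → ℝ)).symm ![x, y, z]

lemma pentVec_norm (x y z : ℝ) (h : x^2 + y^2 + z^2 = 1) : ‖pentVec x y z‖ = 1 := by
  have : ‖pentVec x y z‖ = Real.sqrt (x^2 + y^2 + z^2) := by
    rw [EuclideanSpace.norm_eq]
    congr 1
    simp [pentVec, Fin.sum_univ_three, Real.norm_eq_abs, sq_abs]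
  rw [this, h, Real.sqrt_one]

lemma pentVec_inner (a b c d e f : ℝ) :
    ⟪pentVec a b c, pentVec d e f⟫ = a*d + b*e + c*f := by
  simp [pentVec, PiLp.inner_apply, Fin.sum_univ_three, RCLike.inner_apply]
  ring

lemma inner_pentVec (n : EuclideanSpace ℝ (Fin 3)) (x y z : ℝ) :
    ⟪n, pentVec x y z⟫ = n 0 * x + n 1 * y + n 2 * z := by
  simp [pentVec, PiLp.inner_apply, Fin.sum_univ_three, RCLike.inner_apply]
  ring

set_option maxHeartbeats 2000000 in
theorem pentagonal_star_ground_state_energy (J : ℝ) (hJ : 0 < J) :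
    (∀ s : Fin 6 → EuclideanSpace ℝ (Fin 3), (∀ μ, ‖s μ‖ = 1) →
      -((5 + 2 * Real.sqrt 5) * J) ≤ pentStarEnergy J s) ∧
    ∃ s : Fin 6 → EuclideanSpace ℝ (Fin 3), (∀ μ, ‖s μ‖ = 1) ∧
      (¬ ∃ n : EuclideanSpace ℝ (Fin 3), n ≠ 0 ∧ ∀ μ, ⟪n, s μ⟫ = 0) ∧
      pentStarEnergy J s = -((5 + 2 * Real.sqrt 5) * J) := by
  have hr : Real.sqrt 5 ^ 2 = 5 := Real.sq_sqrt (by norm_num)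
  have hr0 : (0:ℝ) ≤ Real.sqrt 5 := Real.sqrt_nonneg 5
  set r := Real.sqrt 5 with hrdef
  have hrlt : r < 3 := by nlinarith
  have hrgt : 2 < r := by nlinarith
  constructor
  · -- lower bound
    intro s hs
    have hq := pent_sos (s 0) (s 1) (s 2) (s 3) (s 4) (hs 0) (hs 1) (hs 2) (hs 3) (hs 4)
    rw [pentStarEnergy_eq]
    set T : EuclideanSpace ℝ (Fin 3) := s 0 + s 1 + s 2 + s 3 + s 4 with hT
    set e : ℝ := ⟪s 0, s 1⟫ + ⟪s 1, s 2⟫ + ⟪s 2, s 3⟫ + ⟪s 3, s 4⟫ + ⟪s 4, s 0⟫ with he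
    set p : ℝ := ⟪s 0,s 2⟫ + ⟪s 1,s 3⟫ + ⟪s 2,s 4⟫ + ⟪s 0,s 3⟫ + ⟪s 1,s 4⟫ with hp
    have hd : ∀ μ, ⟪s μ, s μ⟫ = (1:ℝ) := fun μ => by
      rw [real_inner_self_eq_norm_sq, hs μ]; norm_num
    have hip : ⟪s 0, s 5⟫ + ⟪s 1, s 5⟫ + ⟪s 2, s 5⟫ + ⟪s 3, s 5⟫ + ⟪s 4, s 5⟫ = ⟪T, s 5⟫ := by
      simp [hT, inner_add_left]
    have hcs : -‖T‖ ≤ ⟪T, s 5⟫ := by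
      have h1 := abs_real_inner_le_norm T (s 5)
      rw [hs 5, mul_one] at h1
      have := abs_le.mp h1
      linarith [this.1]
    have hTsq : ‖T‖^2 = 5 + 2*e + 2*p := by
      rw [← real_inner_self_eq_norm_sq]
      simp only [hT, he, hp, inner_add_left, inner_add_right,
        real_inner_comm (s 0) (s 1), real_inner_comm (s 0) (s 2), real_inner_comm (s 0) (s 3),
        real_inner_comm (s 0) (s 4), real_inner_comm (s 1) (s 2), real_inner_comm (s 1) (s 3),
        real_inner_comm (s 1) (s 4), real_inner_comm (s 2) (s 3), real_inner_comm (s 2) (s 4),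
        real_inner_comm (s 3) (s 4), hd]
      ring
    have hTnn : (0:ℝ) ≤ ‖T‖ := norm_nonneg T
    set n : ℝ := ‖T‖ with hn
    rw [hip]
    have step1 : 5 - 5*r ≤ (3-r)*e - 2*p := by nlinarith [hq, hr, mul_nonneg hr0 hq]
    have step2 : 2*n ≤ 2*e + 5 + 2*r := by
      nlinarith [sq_nonneg (2*n - (5 - r)), hTsq, step1, hrgt, hrlt, hTnn]
    nlinarith [hcs, step2, hJ]
  · -- the ground state
    set ρ : ℝ := Real.sqrt ((7+r)/10) with hρdef
    have hρ : ρ^2 = (7+r)/10 := Real.sq_sqrt (by linarith)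
    have hρpos : 0 < ρ := Real.sqrt_pos.mpr (by linarith)
    set q1 : ℝ := Real.sqrt (10+2*r) / 4 with hq1def
    set q2 : ℝ := Real.sqrt (10-2*r) / 4 with hq2def
    have hq1 : q1^2 = (10+2*r)/16 := by
      rw [hq1def, div_pow, Real.sq_sqrt (by linarith)]; norm_num
    have hq2 : q2^2 = (10-2*r)/16 := by
      rw [hq2def, div_pow, Real.sq_sqrt (by linarith)]; norm_num
    have hq2pos : 0 < q2 := by
      rw [hq2def]
      have := Real.sqrt_pos.mpr (show (0:ℝ) < 10-2*r by linarith)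
      linarith
    have hq12 : q1*q2 = r/4 := by
      rw [hq1def, hq2def, div_mul_div_comm, ← Real.sqrt_mul (by linarith)]
      rw [show (10+2*r)*(10-2*r) = 80 by linear_combination (-4:ℝ) * hr]
      rw [show (80:ℝ) = 4^2 * 5 by norm_num, Real.sqrt_mul (by norm_num),
        Real.sqrt_sq (by norm_num)]
      ring
    set w : Fin 6 → EuclideanSpace ℝ (Fin 3) :=
      ![pentVec ρ 0 ((5-r)/10), pentVec (ρ*(-(r+1)/4)) (ρ*q2) ((5-r)/10),
        pentVec (ρ*((r-1)/4)) (-(ρ*q1)) ((5-r)/10), pentVec (ρ*((r-1)/4)) (ρ*q1) ((5-r)/10),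
        pentVec (ρ*(-(r+1)/4)) (-(ρ*q2)) ((5-r)/10), pentVec 0 0 (-1)] with hw
    have e01 : ⟪w 0, w 1⟫ = -3*r/10 := by
      rw [show w 0 = pentVec ρ 0 ((5-r)/10) from rfl,
          show w 1 = pentVec (ρ*(-(r+1)/4)) (ρ*q2) ((5-r)/10) from rfl, pentVec_inner]
      linear_combination (-(r+1)/4)*hρ + (-3/200)*hr
    have e12 : ⟪w 1, w 2⟫ = -3*r/10 := by
      rw [show w 1 = pentVec (ρ*(-(r+1)/4)) (ρ*q2) ((5-r)/10) from rfl,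
          show w 2 = pentVec (ρ*((r-1)/4)) (-(ρ*q1)) ((5-r)/10) from rfl, pentVec_inner]
      linear_combination (-(ρ^2))*hq12 + (-(ρ^2)/16 - 3/200)*hr + (-(r+1)/4)*hρ
    have e23 : ⟪w 2, w 3⟫ = -3*r/10 := by
      rw [show w 2 = pentVec (ρ*((r-1)/4)) (-(ρ*q1)) ((5-r)/10) from rfl,
          show w 3 = pentVec (ρ*((r-1)/4)) (ρ*q1) ((5-r)/10) from rfl, pentVec_inner]
      linear_combination (-(ρ^2))*hq1 + ((ρ^2)/16 - 3/200)*hr + (-(r+1)/4)*hρ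
    have e34 : ⟪w 3, w 4⟫ = -3*r/10 := by
      rw [show w 3 = pentVec (ρ*((r-1)/4)) (ρ*q1) ((5-r)/10) from rfl,
          show w 4 = pentVec (ρ*(-(r+1)/4)) (-(ρ*q2)) ((5-r)/10) from rfl, pentVec_inner]
      linear_combination (-(ρ^2))*hq12 + (-(ρ^2)/16 - 3/200)*hr + (-(r+1)/4)*hρ
    have e40 : ⟪w 4, w 0⟫ = -3*r/10 := by
      rw [show w 4 = pentVec (ρ*(-(r+1)/4)) (-(ρ*q2)) ((5-r)/10) from rfl,
          show w 0 = pentVec ρ 0 ((5-r)/10) from rfl, pentVec_inner]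
      linear_combination (-(r+1)/4)*hρ + (-3/200)*hr
    have sp : ∀ i : Fin 6, ⟪w i, w 5⟫ = ⟪w i, pentVec 0 0 (-1)⟫ := fun i => rfl
    have s0' : ⟪w 0, w 5⟫ = (r-5)/10 := by
      rw [show w 0 = pentVec ρ 0 ((5-r)/10) from rfl,
          show w 5 = pentVec 0 0 (-1) from rfl, pentVec_inner]; ring
    have s1' : ⟪w 1, w 5⟫ = (r-5)/10 := by
      rw [show w 1 = pentVec (ρ*(-(r+1)/4)) (ρ*q2) ((5-r)/10) from rfl,
          show w 5 = pentVec 0 0 (-1) from rfl, pentVec_inner]; ring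
    have s2' : ⟪w 2, w 5⟫ = (r-5)/10 := by
      rw [show w 2 = pentVec (ρ*((r-1)/4)) (-(ρ*q1)) ((5-r)/10) from rfl,
          show w 5 = pentVec 0 0 (-1) from rfl, pentVec_inner]; ring
    have s3' : ⟪w 3, w 5⟫ = (r-5)/10 := by
      rw [show w 3 = pentVec (ρ*((r-1)/4)) (ρ*q1) ((5-r)/10) from rfl,
          show w 5 = pentVec 0 0 (-1) from rfl, pentVec_inner]; ring
    have s4' : ⟪w 4, w 5⟫ = (r-5)/10 := by
      rw [show w 4 = pentVec (ρ*(-(r+1)/4)) (-(ρ*q2)) ((5-r)/10) from rfl,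
          show w 5 = pentVec 0 0 (-1) from rfl, pentVec_inner]; ring
    refine ⟨w, ?_, ?_, ?_⟩
    · intro μ
      fin_cases μ
      · exact pentVec_norm _ _ _ (by linear_combination hρ + (1/100)*hr)
      · exact pentVec_norm _ _ _ (by
          linear_combination (ρ^2)*hq2 + (ρ^2/16 + 1/100)*hr + hρ)
      · exact pentVec_norm _ _ _ (by
          linear_combination (ρ^2)*hq1 + (ρ^2/16 + 1/100)*hr + hρ)
      · exact pentVec_norm _ _ _ (by
          linear_combination (ρ^2)*hq1 + (ρ^2/16 + 1/100)*hr + hρ)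
      · exact pentVec_norm _ _ _ (by
          linear_combination (ρ^2)*hq2 + (ρ^2/16 + 1/100)*hr + hρ)
      · exact pentVec_norm _ _ _ (by norm_num)
    · rintro ⟨n, hn0, hperp⟩
      have h5 : ⟪n, pentVec 0 0 (-1)⟫ = 0 := hperp 5
      have h0 : ⟪n, pentVec ρ 0 ((5-r)/10)⟫ = 0 := hperp 0
      have h1 : ⟪n, pentVec (ρ*(-(r+1)/4)) (ρ*q2) ((5-r)/10)⟫ = 0 := hperp 1
      rw [inner_pentVec] at h0 h1 h5
      have hn2 : n 2 = 0 := by linarith [h5]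
      have hn0' : n 0 = 0 := by
        have hx : ρ * n 0 = 0 := by linear_combination h0 - ((5-r)/10) * hn2
        exact (mul_eq_zero.mp hx).resolve_left hρpos.ne'
      have hn1 : n 1 = 0 := by
        have hx : n 1 * (ρ * q2) = 0 := by
          nlinarith [h1, hn0', hn2]
        have hne : ρ * q2 ≠ 0 := ne_of_gt (mul_pos hρpos hq2pos)
        exact (mul_eq_zero.mp hx).resolve_right hne
      exact hn0 (by ext i; fin_cases i <;> simpa)
    · rw [pentStarEnergy_eq, e01, e12, e23, e34, e40, s0', s1', s2', s3', s4']
      ring
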